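/- Let X be a compact subset of ℂ, let 2 < p < ∞ with conjugate exponent q = p/(p−1), let x₀ ∈ X, and let 0 < δ₀ < 1. Let k₁ : ℂ → ℂ vanish off X, belong to L^q(X, dA), and satisfy ∫_X f(z) k₁(z) dA_z = f′(x₀) for every rational function f with poles off X, and set k(z) = (z − x₀)k₁(z). Let x ∈ ℂ satisfy ‖(x − x₀)k₁(z)/(z − x)‖_{L^q(dA_z)} ≤ δ₀ and |x − x₀| · ∫ |k(z)|/|z − x| dA_z < δ₀, and set c = ∫ (z − x₀)k(z)/(z − x) dA_z. Then for every G ∈ L^p(X, dA) with ∫_X G(z) k(z) dA_z = 0 and ∫_X G(z) k₁(z) dA_z = 0, one has |(1/c) ∫_X G(z)·(z − x₀)k(z)/(z − x) dA_z| ≤ (δ₀/(1 − δ₀)) · |x − x₀| · ‖G‖_p. -/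

import Mathlib

open MeasureTheory Metric Filter

noncomputable section

/-- A rational function with poles off `X`: a quotient of polynomials whose
denominator has no zeros on `X`. -/
def RatFn (X : Set ℂ) (f : ℂ → ℂ) : Prop :=
  ∃ P Q : Polynomial ℂ, (∀ z ∈ X, Q.eval z ≠ 0) ∧ f = fun z => P.eval z / Q.eval z

set_option maxHeartbeats 1000000 in
/-- Key estimate for Theorem 1: if `k₁ ∈ L^q(X, dA)` represents a first-order bounded
point derivation at `x₀` on `R^p(X)` (`2 < p < ∞`), `k(z) = (z-x₀)k₁(z)`, and `x`
satisfies `‖(x-x₀)k₁(z)/(z-x)‖_q ≤ δ₀` and `|x-x₀| k̃(x) < δ₀` with `0 < δ₀ < 1`, then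
with `c = ∫ (z-x₀)k(z)/(z-x) dA_z`, every `G ∈ L^p(X, dA)` annihilated by both `k dA`
and `k₁ dA` satisfies
`|(1/c) ∫_X G(z)(z-x₀)k(z)/(z-x) dA_z| ≤ (δ₀/(1-δ₀)) |x-x₀| ‖G‖_p`. -/
theorem first_order_difference_estimate
    (X : Set ℂ) (hX : IsCompact X) (p q : ℝ) (hp : 2 < p) (hq : q = p / (p - 1))
    (x₀ : ℂ) (hx₀ : x₀ ∈ X) (δ₀ : ℝ) (hδ₀ : 0 < δ₀) (hδ₀1 : δ₀ < 1)
    (k₁ : ℂ → ℂ) (hk0 : ∀ z ∉ X, k₁ z = 0)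
    (hkLq : MemLp k₁ (ENNReal.ofReal q) (volume.restrict X))
    (hrep : ∀ f : ℂ → ℂ, RatFn X f → ∫ z in X, f z * k₁ z = deriv f x₀)
    (x : ℂ)
    (hx1 : eLpNorm (fun z => (x - x₀) * k₁ z / (z - x)) (ENNReal.ofReal q)
        (volume.restrict X) ≤ ENNReal.ofReal δ₀)
    (hx2 : ‖x - x₀‖ * (∫ z, ‖(z - x₀) * k₁ z‖ / ‖z - x‖) < δ₀)
    (c : ℂ) (hc : c = ∫ z, (z - x₀) * ((z - x₀) * k₁ z) / (z - x)) :
    ∀ G : ℂ → ℂ, MemLp G (ENNReal.ofReal p) (volume.restrict X) →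
      (∫ z in X, G z * ((z - x₀) * k₁ z)) = 0 →
      (∫ z in X, G z * k₁ z) = 0 →
      ‖(1 / c) * ∫ z in X, G z * ((z - x₀) * ((z - x₀) * k₁ z) / (z - x))‖ ≤
        (δ₀ / (1 - δ₀)) * ‖x - x₀‖ *
          (eLpNorm G (ENNReal.ofReal p) (volume.restrict X)).toReal := by
  intro G hG hG1 hG2
  have hp1 : 1 < p := by linarith
  have hpq : p.HolderConjugate q := (Real.holderConjugate_iff_eq_conjExponent hp1).2 hq
  have hq1 : 1 < q := hpq.symm.lt
  have hp0 : (0:ℝ) ≤ p := by linarith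
  have hXm : MeasurableSet X := hX.isClosed.measurableSet
  haveI : IsFiniteMeasure (volume.restrict X) :=
    ⟨by rw [Measure.restrict_apply_univ]; exact hX.measure_lt_top⟩
  have one_le_q : (1 : ENNReal) ≤ ENNReal.ofReal q := ENNReal.one_le_ofReal.2 hq1.le
  -- measurability
  have hk₁m : AEStronglyMeasurable k₁ (volume.restrict X) := hkLq.1
  have hinv : AEStronglyMeasurable (fun z : ℂ => (z - x)⁻¹) (volume.restrict X) :=
    ((measurable_id.sub_const x).inv).aestronglyMeasurable
  have hsubm : AEStronglyMeasurable (fun z : ℂ => z - x₀) (volume.restrict X) :=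
    (measurable_id.sub_const x₀).aestronglyMeasurable
  have hhm : AEStronglyMeasurable (fun z => (x - x₀) * k₁ z / (z - x)) (volume.restrict X) := by
    have e : (fun z => (x - x₀) * k₁ z / (z - x)) =
        fun z => (x - x₀) * k₁ z * (z - x)⁻¹ := by
      funext z; rw [div_eq_mul_inv]
    rw [e]
    exact (aestronglyMeasurable_const.mul hk₁m).mul hinv
  have hhLq : MemLp (fun z => (x - x₀) * k₁ z / (z - x)) (ENNReal.ofReal q)
      (volume.restrict X) := ⟨hhm, lt_of_le_of_lt hx1 ENNReal.ofReal_lt_top⟩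
  -- a.e. z ≠ x
  have hxnull : (volume.restrict X) {x} = 0 := by
    rw [Measure.restrict_apply (measurableSet_singleton x)]
    exact measure_mono_null Set.inter_subset_left (measure_singleton x)
  have hae : ∀ᵐ z ∂(volume.restrict X), z ≠ x := by
    have e : {z : ℂ | ¬ z ≠ x} = {x} := by ext z; simp
    rw [ae_iff, e]; exact hxnull
  -- exponent arithmetic for products
  have hexp : (1 : ENNReal) / 1 = 1 / ENNReal.ofReal p + 1 / ENNReal.ofReal q := by
    simp only [one_div]
    rw [hpq.inv_add_inv_ennreal, inv_one]
  have hGmul : ∀ f : ℂ → ℂ, MemLp f (ENNReal.ofReal q) (volume.restrict X) →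
      Integrable (fun z => G z * f z) (volume.restrict X) := by
    intro f hf
    have h1 : MemLp (G • f) 1 (volume.restrict X) := by
      haveI : ENNReal.HolderTriple (ENNReal.ofReal p) (ENNReal.ofReal q) 1 :=
        ⟨by simpa [one_div] using hexp.symm⟩
      exact hf.smul hG
    have h2 : (G • f) = fun z => G z * f z := rfl
    rw [h2] at h1
    exact memLp_one_iff_integrable.1 h1
  -- G-integral decomposition in the non-degenerate case
  by_cases hxx : x = x₀
  · -- degenerate case: x = x₀, LHS integral vanishes
    have hI : (∫ z in X, G z * ((z - x₀) * ((z - x₀) * k₁ z) / (z - x))) = 0 := by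
      have e : (∫ z in X, G z * ((z - x₀) * ((z - x₀) * k₁ z) / (z - x))) =
          ∫ z in X, G z * ((z - x₀) * k₁ z) := by
        refine integral_congr_ae (hae.mono fun z hz => ?_)
        have hz0 : z - x₀ ≠ 0 := by rw [← hxx]; exact sub_ne_zero.2 hz
        simp only [hxx]
        rw [mul_div_cancel_left₀ _ hz0]
      rw [e, hG1]
    rw [hI, mul_zero, norm_zero]
    have h1 : 0 ≤ δ₀ / (1 - δ₀) := div_nonneg hδ₀.le (by linarith)
    exact mul_nonneg (mul_nonneg h1 (norm_nonneg _)) ENNReal.toReal_nonneg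
  -- main case
  have ha : x - x₀ ≠ 0 := sub_ne_zero.2 hxx
  have hna : ‖x - x₀‖ ≠ 0 := norm_ne_zero_iff.2 ha
  -- bound for z - x₀ on X
  obtain ⟨R, hR⟩ := hX.isBounded.subset_closedBall x₀
  have hRb : ∀ z ∈ X, ‖z - x₀‖ ≤ R := fun z hz => by
    have := hR hz; rwa [Metric.mem_closedBall, dist_eq_norm] at this
  have hR0 : 0 ≤ R := le_trans (by simp) (hRb x₀ hx₀)
  -- MemLp facts
  have hwk : MemLp (fun z => (z - x₀) * k₁ z) (ENNReal.ofReal q) (volume.restrict X) := by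
    refine hkLq.of_le_mul (c := R) (hsubm.mul hk₁m) ?_
    refine ae_restrict_of_forall_mem hXm fun z hz => ?_
    rw [norm_mul]
    exact mul_le_mul_of_nonneg_right (hRb z hz) (norm_nonneg _)
  have hwkd : MemLp (fun z => (z - x₀) * k₁ z / (z - x)) (ENNReal.ofReal q)
      (volume.restrict X) := by
    have hm : AEStronglyMeasurable (fun z => (z - x₀) * k₁ z / (z - x))
        (volume.restrict X) := by
      simp only [div_eq_mul_inv]
      exact (hsubm.mul hk₁m).mul hinv
    refine hhLq.of_le_mul (c := R / ‖x - x₀‖) hm (ae_restrict_of_forall_mem hXm fun z hz => ?_)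
    simp only [norm_div, norm_mul]
    have key : R / ‖x - x₀‖ * (‖x - x₀‖ * ‖k₁ z‖ / ‖z - x‖)
        = R * ‖k₁ z‖ / ‖z - x‖ := by
      rw [← mul_div_assoc, ← mul_assoc, div_mul_cancel₀ _ hna]
    rw [key]
    gcongr <;> first | exact hR0 | exact hRb z hz
  have hwwkd : MemLp (fun z => (z - x₀) * ((z - x₀) * k₁ z) / (z - x)) (ENNReal.ofReal q)
      (volume.restrict X) := by
    have hm : AEStronglyMeasurable (fun z => (z - x₀) * ((z - x₀) * k₁ z) / (z - x))
        (volume.restrict X) := by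
      simp only [div_eq_mul_inv]
      exact (hsubm.mul (hsubm.mul hk₁m)).mul hinv
    refine hhLq.of_le_mul (c := R * R / ‖x - x₀‖) hm (ae_restrict_of_forall_mem hXm fun z hz => ?_)
    simp only [norm_div, norm_mul]
    have key : R * R / ‖x - x₀‖ * (‖x - x₀‖ * ‖k₁ z‖ / ‖z - x‖)
        = R * (R * ‖k₁ z‖) / ‖z - x‖ := by
      rw [← mul_div_assoc, ← mul_assoc, div_mul_cancel₀ _ hna, mul_assoc]
    rw [key]
    gcongr <;> first | exact hR0 | exact hRb z hz
  -- integrabilities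
  have int_wk : Integrable (fun z => (z - x₀) * k₁ z) (volume.restrict X) :=
    hwk.integrable one_le_q
  have int_wkd : Integrable (fun z => (z - x₀) * k₁ z / (z - x)) (volume.restrict X) :=
    hwkd.integrable one_le_q
  have intGwk : Integrable (fun z => G z * ((z - x₀) * k₁ z)) (volume.restrict X) :=
    hGmul _ hwk
  have intGk : Integrable (fun z => G z * k₁ z) (volume.restrict X) := hGmul _ hkLq
  have intGh : Integrable (fun z => G z * ((x - x₀) * k₁ z / (z - x)))
      (volume.restrict X) := hGmul _ hhLq
  -- key identity for the numerator
  have keyI : (∫ z in X, G z * ((z - x₀) * ((z - x₀) * k₁ z) / (z - x))) =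
      (x - x₀) * ∫ z in X, G z * ((x - x₀) * k₁ z / (z - x)) := by
    have e1 : (∫ z in X, G z * ((z - x₀) * ((z - x₀) * k₁ z) / (z - x))) =
        ∫ z in X, (G z * ((z - x₀) * k₁ z) + (x - x₀) * (G z * k₁ z)
          + (x - x₀) * (G z * ((x - x₀) * k₁ z / (z - x)))) := by
      refine integral_congr_ae (hae.mono fun z hz => ?_)
      have hd : z - x ≠ 0 := sub_ne_zero.2 hz
      field_simp
      ring
    have i3 : Integrable (fun z => (x - x₀) * (G z * k₁ z)) (volume.restrict X) :=
      intGk.const_mul _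
    have i2 : Integrable (fun z => (x - x₀) * (G z * ((x - x₀) * k₁ z / (z - x))))
        (volume.restrict X) := intGh.const_mul _
    have i1 : Integrable (fun z => G z * ((z - x₀) * k₁ z) + (x - x₀) * (G z * k₁ z))
        (volume.restrict X) := intGwk.add i3
    rw [e1, integral_add i1 i2, integral_add intGwk i3, hG1, integral_const_mul,
      integral_const_mul, hG2]
    simp
  -- Hölder estimate
  have hGp_eq : (eLpNorm G (ENNReal.ofReal p) (volume.restrict X)).toReal
      = (∫ z in X, ‖G z‖ ^ p) ^ (1 / p) := by
    have hne0 : ENNReal.ofReal p ≠ 0 := by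
      simp only [ne_eq, ENNReal.ofReal_eq_zero, not_le]; linarith
    have e := hG.eLpNorm_eq_integral_rpow_norm hne0 ENNReal.ofReal_ne_top
    rw [ENNReal.toReal_ofReal hp0] at e
    rw [e, ENNReal.toReal_ofReal
      (Real.rpow_nonneg (integral_nonneg fun z => Real.rpow_nonneg (norm_nonneg _) _) _),
      one_div]
  have hhq_eq : (eLpNorm (fun z => (x - x₀) * k₁ z / (z - x)) (ENNReal.ofReal q)
      (volume.restrict X)).toReal
      = (∫ z in X, ‖(x - x₀) * k₁ z / (z - x)‖ ^ q) ^ (1 / q) := by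
    have hne0 : ENNReal.ofReal q ≠ 0 := by
      simp only [ne_eq, ENNReal.ofReal_eq_zero, not_le]; linarith
    have e := hhLq.eLpNorm_eq_integral_rpow_norm hne0 ENNReal.ofReal_ne_top
    rw [ENNReal.toReal_ofReal (by linarith : (0:ℝ) ≤ q)] at e
    rw [e, ENNReal.toReal_ofReal
      (Real.rpow_nonneg (integral_nonneg fun z => Real.rpow_nonneg (norm_nonneg _) _) _),
      one_div]
  have hhq_le : (eLpNorm (fun z => (x - x₀) * k₁ z / (z - x)) (ENNReal.ofReal q)
      (volume.restrict X)).toReal ≤ δ₀ := by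
    have h2 := ENNReal.toReal_mono ENNReal.ofReal_ne_top hx1
    rwa [ENNReal.toReal_ofReal hδ₀.le] at h2
  have holder : ‖∫ z in X, G z * ((x - x₀) * k₁ z / (z - x))‖ ≤
      (eLpNorm G (ENNReal.ofReal p) (volume.restrict X)).toReal * δ₀ := by
    calc ‖∫ z in X, G z * ((x - x₀) * k₁ z / (z - x))‖
        ≤ ∫ z in X, ‖G z * ((x - x₀) * k₁ z / (z - x))‖ := norm_integral_le_integral_norm _
      _ = ∫ z in X, ‖G z‖ * ‖(x - x₀) * k₁ z / (z - x)‖ := by simp only [norm_mul]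
      _ ≤ (∫ z in X, ‖G z‖ ^ p) ^ (1 / p)
          * (∫ z in X, ‖(x - x₀) * k₁ z / (z - x)‖ ^ q) ^ (1 / q) :=
        integral_mul_norm_le_Lp_mul_Lq hpq hG hhLq
      _ = (eLpNorm G (ENNReal.ofReal p) (volume.restrict X)).toReal
          * (∫ z in X, ‖(x - x₀) * k₁ z / (z - x)‖ ^ q) ^ (1 / q) := by rw [hGp_eq]
      _ ≤ (eLpNorm G (ENNReal.ofReal p) (volume.restrict X)).toReal * δ₀ := by
          refine mul_le_mul_of_nonneg_left ?_ ENNReal.toReal_nonneg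
          rw [← hhq_eq]; exact hhq_le
  -- value of ∫ (z - x₀) k₁
  have hwint : (∫ z in X, (z - x₀) * k₁ z) = 1 := by
    have hf : RatFn X (fun z => z - x₀) := by
      refine ⟨Polynomial.X - Polynomial.C x₀, 1, fun z _ => by simp, ?_⟩
      funext z; simp
    calc (∫ z in X, (z - x₀) * k₁ z) = deriv (fun z : ℂ => z - x₀) x₀ := by
          simpa using hrep _ hf
      _ = 1 := by simp
  -- c as a set integral
  have hcX : c = ∫ z in X, (z - x₀) * ((z - x₀) * k₁ z) / (z - x) := by
    rw [hc]
    exact (setIntegral_eq_integral_of_forall_compl_eq_zero fun z hz => by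
      rw [hk0 z hz]; simp).symm
  -- split c
  have hcsplit : c = 1 + (x - x₀) * ∫ z in X, (z - x₀) * k₁ z / (z - x) := by
    rw [hcX]
    have e : (∫ z in X, (z - x₀) * ((z - x₀) * k₁ z) / (z - x)) =
        ∫ z in X, ((z - x₀) * k₁ z + (x - x₀) * ((z - x₀) * k₁ z / (z - x))) := by
      refine integral_congr_ae (hae.mono fun z hz => ?_)
      have hd : z - x ≠ 0 := sub_ne_zero.2 hz
      field_simp
      ring
    have i4 : Integrable (fun z => (x - x₀) * ((z - x₀) * k₁ z / (z - x)))
        (volume.restrict X) := int_wkd.const_mul _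
    rw [e, integral_add int_wk i4, hwint, integral_const_mul]
  -- bound on ‖c - 1‖
  have hnormint : ‖∫ z in X, (z - x₀) * k₁ z / (z - x)‖ ≤
      ∫ z, ‖(z - x₀) * k₁ z‖ / ‖z - x‖ := by
    calc ‖∫ z in X, (z - x₀) * k₁ z / (z - x)‖
        ≤ ∫ z in X, ‖(z - x₀) * k₁ z / (z - x)‖ := norm_integral_le_integral_norm _
      _ = ∫ z in X, ‖(z - x₀) * k₁ z‖ / ‖z - x‖ := by simp only [norm_div]
      _ = ∫ z, ‖(z - x₀) * k₁ z‖ / ‖z - x‖ :=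
        setIntegral_eq_integral_of_forall_compl_eq_zero fun z hz => by
          rw [hk0 z hz]; simp
  have hc1 : ‖c - 1‖ < δ₀ := by
    rw [hcsplit, add_sub_cancel_left, norm_mul]
    calc ‖x - x₀‖ * ‖∫ z in X, (z - x₀) * k₁ z / (z - x)‖
        ≤ ‖x - x₀‖ * ∫ z, ‖(z - x₀) * k₁ z‖ / ‖z - x‖ :=
          mul_le_mul_of_nonneg_left hnormint (norm_nonneg _)
      _ < δ₀ := hx2
  have hcpos : 1 - δ₀ ≤ ‖c‖ := by
    have h1 : ‖(1:ℂ)‖ ≤ ‖c‖ + ‖c - 1‖ := by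
      calc ‖(1:ℂ)‖ = ‖c - (c - 1)‖ := by congr 1; ring
        _ ≤ ‖c‖ + ‖c - 1‖ := norm_sub_le _ _
    rw [norm_one] at h1; linarith
  have hδpos : (0:ℝ) < 1 - δ₀ := by linarith
  -- conclusion
  rw [keyI, norm_mul, norm_mul, norm_div, norm_one]
  calc 1 / ‖c‖ * (‖x - x₀‖ * ‖∫ z in X, G z * ((x - x₀) * k₁ z / (z - x))‖)
      ≤ 1 / (1 - δ₀) * (‖x - x₀‖ *
        ((eLpNorm G (ENNReal.ofReal p) (volume.restrict X)).toReal * δ₀)) := by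
        gcongr
    _ = (δ₀ / (1 - δ₀)) * ‖x - x₀‖ *
        (eLpNorm G (ENNReal.ofReal p) (volume.restrict X)).toReal := by ring
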